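/- Let t ≥ 11 be a real number and let G be a t-tough (2P2 ∪ P1)-free graph on n vertices. Suppose there is an edge uv of G with |N_G(u) ∪ N_G(v)| ≤ 5n/12, let S = (N_G(u) ∪ N_G(v)) \ {u, v}, and suppose G − S has exactly two components, one being {u, v} and the other being D2. Let S1 = {x ∈ S : x has fewer than 2n/(t+1) neighbors in V(D2)} and let G1 be the subgraph of G induced on S1 ∪ {u, v}. Then G1 is (P2 ∪ P1)-free. -/
import Mathlib


open SimpleGraph

variable {V : Type*}

/-- The number of connected components of `G - S`. -/
noncomputable def SimpleGraph.compCount (G : SimpleGraph V) (S : Set V) : ℕ :=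
  Nat.card (G.induce Sᶜ).ConnectedComponent

/-- `S` is a cutset of `G`: `G - S` has at least two connected components. -/
def SimpleGraph.IsCutset (G : SimpleGraph V) (S : Set V) : Prop :=
  2 ≤ G.compCount S

/-- `G` is `t`-tough. -/
def SimpleGraph.Tough (t : ℝ) (G : SimpleGraph V) : Prop :=
  ∀ S : Set V, G.IsCutset S → t * G.compCount S ≤ S.ncard

/-- `G` contains no induced subgraph isomorphic to `H`. -/
def SimpleGraph.IndFree {W : Type*} (G : SimpleGraph V) (H : SimpleGraph W) : Prop :=
  ¬ ∃ f : W ↪ V, ∀ a b : W, G.Adj (f a) (f b) ↔ H.Adj a b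

/-- The 5-vertex graph `2P2 ∪ P1`: two disjoint edges and an isolated vertex. -/
def twoP2P1 : SimpleGraph (Fin 5) :=
  SimpleGraph.fromRel (fun i j => (i = 0 ∧ j = 1) ∨ (i = 2 ∧ j = 3))

/-- The 3-vertex graph `P2 ∪ P1`: an edge and an isolated vertex. -/
def P2P1 : SimpleGraph (Fin 3) :=
  SimpleGraph.fromRel (fun i j => i = 0 ∧ j = 1)

/-- The path on four vertices `P4`. -/
def P4 : SimpleGraph (Fin 4) :=
  SimpleGraph.fromRel (fun i j => (i = 0 ∧ j = 1) ∨ (i = 1 ∧ j = 2) ∨ (i = 2 ∧ j = 3))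

/-- Degree of a vertex, as the cardinality of its neighbor set. -/
noncomputable def SimpleGraph.deg (G : SimpleGraph V) (v : V) : ℕ :=
  (G.neighborSet v).ncard

/-- Minimum degree. -/
noncomputable def SimpleGraph.minDeg (G : SimpleGraph V) : ℕ :=
  sInf (Set.range G.deg)

/-- An independent set of vertices. -/
def SimpleGraph.IsIndepSet' (G : SimpleGraph V) (s : Set V) : Prop :=
  s.Pairwise (fun u v => ¬ G.Adj u v)

/-- The independence number. -/
noncomputable def SimpleGraph.indepNum' (G : SimpleGraph V) : ℕ :=
  sSup {n : ℕ | ∃ s : Set V, G.IsIndepSet' s ∧ s.ncard = n}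

/-- `G` is a complete graph. -/
def SimpleGraph.IsCompleteGraph (G : SimpleGraph V) : Prop :=
  ∀ u v : V, u ≠ v → G.Adj u v

open scoped Classical in
/-- Vertex connectivity: minimum size of a cutset for a noncomplete graph,
and `|V| - 1` for a complete graph. -/
noncomputable def SimpleGraph.kappa (G : SimpleGraph V) : ℕ :=
  if G.IsCompleteGraph then Nat.card V - 1
  else sInf {n : ℕ | ∃ S : Set V, G.IsCutset S ∧ S.ncard = n}

open scoped Classical in
/-- The scattering number: `max {c(G-S) - |S| : S a cutset}` for a noncomplete graph,
and `⊤` for a complete graph. -/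
noncomputable def SimpleGraph.scatter (G : SimpleGraph V) : WithTop ℤ :=
  if G.IsCompleteGraph then ⊤
  else ((sSup {z : ℤ | ∃ S : Set V, G.IsCutset S ∧
      z = (G.compCount S : ℤ) - (S.ncard : ℤ)} : ℤ) : WithTop ℤ)

/-- A `W`-matched path-cover of the vertex set `A`: a union of vertex-disjoint paths of `G`
covering `A`, each of whose two endvertices belong to `W`. -/
structure SimpleGraph.PathCover (G : SimpleGraph V) (A : Set V) (W : Set V) where
  num : ℕ
  left : Fin num → V
  right : Fin num → V
  walk : ∀ i, G.Walk (left i) (right i)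
  isPath : ∀ i, (walk i).IsPath
  disj : ∀ i j, i ≠ j → ∀ v, v ∈ (walk i).support → v ∉ (walk j).support
  cover : A ⊆ {v | ∃ i, v ∈ (walk i).support}
  matched : ∀ i, left i ∈ W ∧ right i ∈ W

private lemma compCount_aux {V : Type*} [Fintype V] (G : SimpleGraph V) (T : Set V)
    (u v : V) (A : Set V) (huv : G.Adj u v)
    (hW : Tᶜ = {u, v} ∪ A) (huA : u ∉ A)
    (hiso : ∀ a ∈ A, ∀ w ∈ Tᶜ, ¬ G.Adj a w) :
    G.compCount T = A.ncard + 1 := by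
  classical
  have huT : u ∈ Tᶜ := by rw [hW]; exact Or.inl (Or.inl rfl)
  have hvT : v ∈ Tᶜ := by rw [hW]; exact Or.inl (Or.inr rfl)
  set H := G.induce Tᶜ with hH
  set φ : ↥Tᶜ → Option ↥A := fun w => if h : (w : V) ∈ A then some ⟨w, h⟩ else none with hφ
  have hGadj : ∀ w₁ w₂ : ↥Tᶜ, H.Adj w₁ w₂ → G.Adj ↑w₁ ↑w₂ := by
    intro w₁ w₂ h; exact h
  have hstep : ∀ w₁ w₂ : ↥Tᶜ, H.Adj w₁ w₂ → φ w₁ = φ w₂ := by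
    intro w₁ w₂ h
    have hg := hGadj _ _ h
    have h1 : (w₁ : V) ∉ A := fun hA => hiso _ hA _ w₂.2 hg
    have h2 : (w₂ : V) ∉ A := fun hA => hiso _ hA _ w₁.2 hg.symm
    simp [hφ, h1, h2]
  have hwalk : ∀ (w₁ w₂ : ↥Tᶜ) (p : H.Walk w₁ w₂), p.IsPath → φ w₁ = φ w₂ := by
    intro w₁ w₂ p hp
    clear hp
    induction p with
    | nil => rfl
    | cons h p ih => exact (hstep _ _ h).trans ih
  set ψ : H.ConnectedComponent → Option ↥A := ConnectedComponent.lift φ hwalk with hψ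
  have hψmk : ∀ w : ↥Tᶜ, ψ (H.connectedComponentMk w) = φ w := fun _ => rfl
  have hmemW : ∀ w : ↥Tᶜ, (w : V) ∉ A → (w : V) = u ∨ (w : V) = v := by
    intro w hwA
    have h2 := (Set.ext_iff.mp hW (w : V)).mp w.2
    rcases h2 with h | h
    · exact h
    · exact absurd h hwA
  have hreach : ∀ w : ↥Tᶜ, (w : V) ∉ A →
      H.connectedComponentMk w = H.connectedComponentMk ⟨u, huT⟩ := by
    intro w hwA
    rcases hmemW w hwA with h | h
    · congr 1; exact Subtype.ext h
    · apply ConnectedComponent.sound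
      apply Adj.reachable
      show G.Adj ↑w u
      rw [h]; exact huv.symm
  have hbij : Function.Bijective ψ := by
    constructor
    · intro c₁ c₂ hc
      obtain ⟨w₁, rfl⟩ := c₁.exists_rep
      obtain ⟨w₂, rfl⟩ := c₂.exists_rep
      show H.connectedComponentMk w₁ = H.connectedComponentMk w₂
      have hc : φ w₁ = φ w₂ := hc
      by_cases h1 : (w₁ : V) ∈ A <;> by_cases h2 : (w₂ : V) ∈ A
      · simp only [hφ, dif_pos h1, dif_pos h2, Option.some.injEq] at hc
        have h3 : (w₁ : V) = (w₂ : V) := congrArg (Subtype.val : ↥A → V) hc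
        exact congrArg _ (Subtype.ext h3)
      · simp [hφ, dif_pos h1, dif_neg h2] at hc
      · simp [hφ, dif_neg h1, dif_pos h2] at hc
      · rw [hreach w₁ h1, hreach w₂ h2]
    · intro o
      match o with
      | none =>
        refine ⟨H.connectedComponentMk ⟨u, huT⟩, ?_⟩
        rw [hψmk]; simp [hφ, huA]
      | some a =>
        have haT : (a : V) ∈ Tᶜ := by rw [hW]; exact Or.inr a.2
        refine ⟨H.connectedComponentMk ⟨a, haT⟩, ?_⟩
        rw [hψmk]; simp [hφ, a.2]
  have hcard := Nat.card_eq_of_bijective ψ hbij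
  rw [SimpleGraph.compCount]
  rw [show (G.induce Tᶜ) = H from rfl, hcard, Finite.card_option, Nat.card_coe_set_eq]

set_option maxHeartbeats 1600000 in
/-- Case 1, Claim 2: with `S = (N(u) ∪ N(v)) \ {u,v}`, `G - S` having exactly two components
(one being `{u,v}`, the other `D2`), and `S1` the vertices of `S` with fewer than `2n/(t+1)`
neighbors in `D2`, the graph `G1 = G[S1 ∪ {u,v}]` is `(P2 ∪ P1)`-free. -/
theorem stmt_12 {V : Type*} [Fintype V] (t : ℝ) (ht : 11 ≤ t) (G : SimpleGraph V)
    (htough : G.Tough t) (hfree : G.IndFree twoP2P1)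
    (u v : V) (huv : G.Adj u v)
    (hnbr : ((G.neighborSet u ∪ G.neighborSet v).ncard : ℝ) ≤ 5 * (Fintype.card V) / 12)
    (S : Set V) (hS : S = (G.neighborSet u ∪ G.neighborSet v) \ {u, v})
    (hcc : G.compCount S = 2)
    (huvcomp : ∃ hu : u ∈ Sᶜ,
      ((G.induce Sᶜ).connectedComponentMk ⟨u, hu⟩).supp
        = {w : ↥Sᶜ | (w : V) = u ∨ (w : V) = v})
    (D2 : Set V) (hD2 : D2 = Sᶜ \ {u, v})
    (S1 : Set V)
    (hS1 : S1 = {x ∈ S |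
      ((G.neighborSet x ∩ D2).ncard : ℝ) < 2 * (Fintype.card V) / (t + 1)}) :
    (G.induce (S1 ∪ {u, v})).IndFree P2P1 := by
  classical
  rintro ⟨f, hf⟩
  have ht1 : (0 : ℝ) < t + 1 := by linarith
  set n := Fintype.card V with hn
  have hn1 : (1 : ℝ) ≤ (n : ℝ) := by
    have : 0 < n := Fintype.card_pos_iff.mpr ⟨u⟩
    exact_mod_cast this
  -- basic facts about S and D2
  have hUsub : G.neighborSet u ∪ G.neighborSet v ⊆ S ∪ {u, v} := by
    rw [hS]; intro w hw
    by_cases h : w ∈ ({u, v} : Set V)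
    · exact Or.inr h
    · exact Or.inl ⟨hw, h⟩
  have huS : u ∉ S := by rw [hS]; rintro ⟨-, h⟩; exact h (Or.inl rfl)
  have hvS : v ∉ S := by rw [hS]; rintro ⟨-, h⟩; exact h (Or.inr rfl)
  have hD2' : ∀ w ∈ D2, w ∉ S ∧ w ≠ u ∧ w ≠ v := by
    intro w hw
    rw [hD2] at hw
    obtain ⟨h1, h2⟩ := hw
    exact ⟨h1, fun h => h2 (by simp [h]), fun h => h2 (by simp [h])⟩
  have huD2 : u ∉ D2 := fun h => (hD2' u h).2.1 rfl
  have hvD2 : v ∉ D2 := fun h => (hD2' v h).2.2 rfl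
  -- the three vertices of the induced P2 ∪ P1
  set x : V := ↑(f 0) with hx
  set y : V := ↑(f 1) with hy
  set z : V := ↑(f 2) with hz
  have hxmem : x ∈ S1 ∪ {u, v} := (f 0).2
  have hymem : y ∈ S1 ∪ {u, v} := (f 1).2
  have hzmem : z ∈ S1 ∪ {u, v} := (f 2).2
  have hP01 : P2P1.Adj 0 1 := by simp [P2P1, SimpleGraph.fromRel_adj]
  have hP20 : ¬ P2P1.Adj 2 0 := by simp [P2P1, SimpleGraph.fromRel_adj]
  have hP21 : ¬ P2P1.Adj 2 1 := by simp [P2P1, SimpleGraph.fromRel_adj]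
  have hxy : G.Adj x y := (hf 0 1).mpr hP01
  have hzx : ¬ G.Adj z x := fun h => hP20 ((hf 2 0).mp h)
  have hzy : ¬ G.Adj z y := fun h => hP21 ((hf 2 1).mp h)
  have hzxne : z ≠ x := fun h => (by decide : (2 : Fin 3) ≠ 0) (f.injective (Subtype.ext h))
  have hzyne : z ≠ y := fun h => (by decide : (2 : Fin 3) ≠ 1) (f.injective (Subtype.ext h))
  -- B and A
  set B : Set V := D2 ∩ (G.neighborSet x ∪ G.neighborSet y ∪ G.neighborSet z) with hB
  set A : Set V := D2 \ B with hA
  have hBD2 : B ⊆ D2 := Set.inter_subset_left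
  -- counting neighbors in D2
  have hw_count : ∀ w, w ∈ S1 ∪ {u, v} →
      ((G.neighborSet w ∩ D2).ncard : ℝ) < 2 * n / (t + 1) := by
    intro w hw
    rcases hw with hw | hw
    · rw [hS1] at hw; exact hw.2
    · have hempty : G.neighborSet w ∩ D2 = ∅ := by
        ext a
        simp only [Set.mem_inter_iff, Set.mem_empty_iff_false, iff_false, not_and]
        intro ha haD
        have haU : a ∈ G.neighborSet u ∪ G.neighborSet v := by
          simp only [Set.mem_insert_iff, Set.mem_singleton_iff] at hw
          rcases hw with rfl | rfl
          · exact Or.inl ha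
          · exact Or.inr ha
        obtain ⟨h1, h2, h3⟩ := hD2' a haD
        rcases hUsub haU with h | h
        · exact h1 h
        · simp only [Set.mem_insert_iff, Set.mem_singleton_iff] at h
          rcases h with rfl | rfl
          · exact h2 rfl
          · exact h3 rfl
      rw [hempty]
      simpa using div_pos (by linarith : (0:ℝ) < 2 * n) ht1
  -- bound on |B|
  have hBcard : (B.ncard : ℝ) < 2 * n / (t + 1) + (2 * n / (t + 1) + 2 * n / (t + 1)) := by
    have hBsub : B ⊆ (G.neighborSet x ∩ D2) ∪
        ((G.neighborSet y ∩ D2) ∪ (G.neighborSet z ∩ D2)) := by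
      rintro w ⟨hwD, hwN⟩
      rcases hwN with (h | h) | h
      · exact Or.inl ⟨h, hwD⟩
      · exact Or.inr (Or.inl ⟨h, hwD⟩)
      · exact Or.inr (Or.inr ⟨h, hwD⟩)
    have h1 := Set.ncard_le_ncard hBsub (Set.toFinite _)
    have h2 := Set.ncard_union_le (G.neighborSet x ∩ D2)
        ((G.neighborSet y ∩ D2) ∪ (G.neighborSet z ∩ D2))
    have h3 := Set.ncard_union_le (G.neighborSet y ∩ D2) (G.neighborSet z ∩ D2)
    have cx := hw_count x hxmem
    have cy := hw_count y hymem
    have cz := hw_count z hzmem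
    have hle : (B.ncard : ℝ) ≤ ((G.neighborSet x ∩ D2).ncard : ℝ) +
        (((G.neighborSet y ∩ D2).ncard : ℝ) + ((G.neighborSet z ∩ D2).ncard : ℝ)) := by
      exact_mod_cast le_trans h1 (le_trans h2 (by omega))
    linarith
  have hb6 : (B.ncard : ℝ) * (t + 1) < 6 * n := by
    have h2 : (B.ncard : ℝ) < 6 * n / (t + 1) := by
      have : 2 * (n:ℝ) / (t + 1) + (2 * n / (t + 1) + 2 * n / (t + 1)) = 6 * n / (t+1) := by
        ring
      linarith [hBcard, this]
    exact (lt_div_iff₀ ht1).mp h2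
  -- cardinalities
  have hUS : (G.neighborSet u ∪ G.neighborSet v).ncard = S.ncard + 2 := by
    have hsub2 : ({u, v} : Set V) ⊆ G.neighborSet u ∪ G.neighborSet v := by
      intro w hw
      simp only [Set.mem_insert_iff, Set.mem_singleton_iff] at hw
      rcases hw with rfl | rfl
      · exact Or.inr huv.symm
      · exact Or.inl huv
    rw [hS, ← Set.ncard_diff_add_ncard_of_subset hsub2 (Set.toFinite _),
      Set.ncard_pair (G.ne_of_adj huv)]
  have hsle : (S.ncard : ℝ) ≤ 5 * n / 12 - 2 := by
    rw [hUS] at hnbr; push_cast at hnbr; linarith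
  have hUVsub : ({u, v} : Set V) ⊆ Sᶜ := by
    intro w hw
    simp only [Set.mem_insert_iff, Set.mem_singleton_iff] at hw
    rcases hw with rfl | rfl
    · exact huS
    · exact hvS
  have hScn : (S.ncard : ℝ) + (Sᶜ.ncard : ℝ) = n := by
    have := Set.ncard_add_ncard_compl S (Set.toFinite _) (Set.toFinite _)
    rw [Nat.card_eq_fintype_card] at this
    exact_mod_cast this
  have hD2card : (D2.ncard : ℝ) = n - S.ncard - 2 := by
    have h2 : ((D2.ncard : ℝ)) = (Sᶜ.ncard : ℝ) - 2 := by
      rw [hD2, Set.cast_ncard_sdiff hUVsub (Set.toFinite _),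
        Set.ncard_pair (G.ne_of_adj huv)]
      norm_num
    linarith
  have hAcard : (A.ncard : ℝ) = (D2.ncard : ℝ) - (B.ncard : ℝ) :=
    Set.cast_ncard_sdiff hBD2 (Set.toFinite _)
  have hb0 : (0 : ℝ) ≤ (B.ncard : ℝ) := Nat.cast_nonneg _
  have hbt : (0 : ℝ) ≤ (B.ncard : ℝ) * (t - 11) := mul_nonneg hb0 (by linarith)
  have hApos : (0 : ℝ) < (A.ncard : ℝ) := by nlinarith
  have hA1 : 1 ≤ A.ncard := by exact_mod_cast Nat.one_le_iff_ne_zero.mpr (by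
    intro h0
    rw [h0] at hApos
    simp at hApos)
  -- the key dichotomy
  by_cases hedge : ∃ a ∈ A, ∃ b ∈ A, G.Adj a b
  · -- an edge in A gives an induced 2P2 ∪ P1
    obtain ⟨a, haA, b, hbA, hab⟩ := hedge
    have hnadj : ∀ w ∈ A, ¬ G.Adj x w ∧ ¬ G.Adj y w ∧ ¬ G.Adj z w := by
      intro w hw
      refine ⟨fun h => hw.2 ⟨hw.1, Or.inl (Or.inl h)⟩,
        fun h => hw.2 ⟨hw.1, Or.inl (Or.inr h)⟩,
        fun h => hw.2 ⟨hw.1, Or.inr h⟩⟩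
    obtain ⟨hxa, hya, hza⟩ := hnadj a haA
    obtain ⟨hxb, hyb, hzb⟩ := hnadj b hbA
    have hnotD2 : ∀ w ∈ S1 ∪ {u, v}, w ∉ D2 := by
      intro w hw hwD
      obtain ⟨h1, h2, h3⟩ := hD2' w hwD
      rcases hw with hw | hw
      · rw [hS1] at hw; exact h1 hw.1
      · simp only [Set.mem_insert_iff, Set.mem_singleton_iff] at hw
        rcases hw with rfl | rfl
        · exact h2 rfl
        · exact h3 rfl
    have haD2 : a ∈ D2 := haA.1
    have hbD2 : b ∈ D2 := hbA.1
    have hxa' : x ≠ a := fun h => hnotD2 x hxmem (h ▸ haD2)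
    have hxb' : x ≠ b := fun h => hnotD2 x hxmem (h ▸ hbD2)
    have hya' : y ≠ a := fun h => hnotD2 y hymem (h ▸ haD2)
    have hyb' : y ≠ b := fun h => hnotD2 y hymem (h ▸ hbD2)
    have hza' : z ≠ a := fun h => hnotD2 z hzmem (h ▸ haD2)
    have hzb' : z ≠ b := fun h => hnotD2 z hzmem (h ▸ hbD2)
    have hxyne : x ≠ y := G.ne_of_adj hxy
    have habne : a ≠ b := G.ne_of_adj hab
    -- symmetric adjacency negations
    have hax : ¬ G.Adj a x := fun h => hxa h.symm
    have hbx : ¬ G.Adj b x := fun h => hxb h.symm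
    have hay : ¬ G.Adj a y := fun h => hya h.symm
    have hby : ¬ G.Adj b y := fun h => hyb h.symm
    have haz : ¬ G.Adj a z := fun h => hza h.symm
    have hbz : ¬ G.Adj b z := fun h => hzb h.symm
    have hxz : ¬ G.Adj x z := fun h => hzx h.symm
    have hyz : ¬ G.Adj y z := fun h => hzy h.symm
    have hyx : G.Adj y x := hxy.symm
    have hba : G.Adj b a := hab.symm
    let F : Fin 5 → V := fun i => match i with
      | 0 => x | 1 => y | 2 => a | 3 => b | 4 => z
    refine hfree ⟨⟨F, ?_⟩, ?_⟩
    · intro i j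
      fin_cases i <;> fin_cases j <;> intro hij <;>
        first
          | rfl
          | exact absurd hij hxyne
          | exact absurd hij hxyne.symm
          | exact absurd hij hxa'
          | exact absurd hij hxa'.symm
          | exact absurd hij hxb'
          | exact absurd hij hxb'.symm
          | exact absurd hij hya'
          | exact absurd hij hya'.symm
          | exact absurd hij hyb'
          | exact absurd hij hyb'.symm
          | exact absurd hij hza'
          | exact absurd hij hza'.symm
          | exact absurd hij hzb'
          | exact absurd hij hzb'.symm
          | exact absurd hij habne
          | exact absurd hij habne.symm
          | exact absurd hij hzxne
          | exact absurd hij hzxne.symm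
          | exact absurd hij hzyne
          | exact absurd hij hzyne.symm
    · intro i j
      fin_cases i <;> fin_cases j <;>
        first
          | exact iff_of_true hxy ((SimpleGraph.fromRel_adj _ _ _).mpr (by decide))
          | exact iff_of_true hyx ((SimpleGraph.fromRel_adj _ _ _).mpr (by decide))
          | exact iff_of_true hab ((SimpleGraph.fromRel_adj _ _ _).mpr (by decide))
          | exact iff_of_true hba ((SimpleGraph.fromRel_adj _ _ _).mpr (by decide))
          | exact iff_of_false (G.irrefl) (fun hc => absurd ((SimpleGraph.fromRel_adj _ _ _).mp hc) (by decide))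
          | exact iff_of_false hxa (fun hc => absurd ((SimpleGraph.fromRel_adj _ _ _).mp hc) (by decide))
          | exact iff_of_false hxb (fun hc => absurd ((SimpleGraph.fromRel_adj _ _ _).mp hc) (by decide))
          | exact iff_of_false hya (fun hc => absurd ((SimpleGraph.fromRel_adj _ _ _).mp hc) (by decide))
          | exact iff_of_false hyb (fun hc => absurd ((SimpleGraph.fromRel_adj _ _ _).mp hc) (by decide))
          | exact iff_of_false hza (fun hc => absurd ((SimpleGraph.fromRel_adj _ _ _).mp hc) (by decide))
          | exact iff_of_false hzb (fun hc => absurd ((SimpleGraph.fromRel_adj _ _ _).mp hc) (by decide))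
          | exact iff_of_false hax (fun hc => absurd ((SimpleGraph.fromRel_adj _ _ _).mp hc) (by decide))
          | exact iff_of_false hbx (fun hc => absurd ((SimpleGraph.fromRel_adj _ _ _).mp hc) (by decide))
          | exact iff_of_false hay (fun hc => absurd ((SimpleGraph.fromRel_adj _ _ _).mp hc) (by decide))
          | exact iff_of_false hby (fun hc => absurd ((SimpleGraph.fromRel_adj _ _ _).mp hc) (by decide))
          | exact iff_of_false haz (fun hc => absurd ((SimpleGraph.fromRel_adj _ _ _).mp hc) (by decide))
          | exact iff_of_false hbz (fun hc => absurd ((SimpleGraph.fromRel_adj _ _ _).mp hc) (by decide))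
          | exact iff_of_false hzx (fun hc => absurd ((SimpleGraph.fromRel_adj _ _ _).mp hc) (by decide))
          | exact iff_of_false hzy (fun hc => absurd ((SimpleGraph.fromRel_adj _ _ _).mp hc) (by decide))
          | exact iff_of_false hxz (fun hc => absurd ((SimpleGraph.fromRel_adj _ _ _).mp hc) (by decide))
          | exact iff_of_false hyz (fun hc => absurd ((SimpleGraph.fromRel_adj _ _ _).mp hc) (by decide))
  · -- A independent: toughness contradiction
    push_neg at hedge
    set T := S ∪ B with hT
    have hTc : Tᶜ = {u, v} ∪ A := by
      ext w
      simp only [hT, Set.mem_compl_iff, Set.mem_union, not_or, hA, Set.mem_diff,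
        Set.mem_insert_iff, Set.mem_singleton_iff]
      constructor
      · rintro ⟨hwS, hwB⟩
        by_cases hw : w = u ∨ w = v
        · exact Or.inl hw
        · push_neg at hw
          refine Or.inr ⟨?_, hwB⟩
          rw [hD2]
          exact ⟨hwS, by simp [hw.1, hw.2]⟩
      · rintro (hw | ⟨hwD, hwB⟩)
        · constructor
          · rcases hw with rfl | rfl
            · exact huS
            · exact hvS
          · intro hwB
            rcases hw with rfl | rfl
            · exact huD2 (hBD2 hwB)
            · exact hvD2 (hBD2 hwB)
        · exact ⟨(hD2' w hwD).1, hwB⟩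
    have huA : u ∉ A := fun h => huD2 h.1
    have hiso : ∀ a ∈ A, ∀ w ∈ Tᶜ, ¬ G.Adj a w := by
      intro a haA w hwT hadj
      have hwT' := (Set.ext_iff.mp hTc w).mp hwT
      rcases hwT' with hw | hwA
      · have haU : a ∈ G.neighborSet u ∪ G.neighborSet v := by
          simp only [Set.mem_insert_iff, Set.mem_singleton_iff] at hw
          rcases hw with rfl | rfl
          · exact Or.inl hadj.symm
          · exact Or.inr hadj.symm
        obtain ⟨h1, h2, h3⟩ := hD2' a haA.1
        rcases hUsub haU with h | h
        · exact h1 h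
        · simp only [Set.mem_insert_iff, Set.mem_singleton_iff] at h
          rcases h with rfl | rfl
          · exact h2 rfl
          · exact h3 rfl
      · exact hedge a haA w hwA hadj
    have hcomp := compCount_aux G T u v A huv hTc huA hiso
    have hcut : G.IsCutset T := by
      rw [SimpleGraph.IsCutset, hcomp]; omega
    have htb := htough T hcut
    rw [hcomp] at htb
    have hdisj : Disjoint S B :=
      Set.disjoint_left.mpr (fun w hwS hwB => (hD2' w (hBD2 hwB)).1 hwS)
    have hTcard : T.ncard = S.ncard + B.ncard :=
      Set.ncard_union_eq hdisj (Set.toFinite _) (Set.toFinite _)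
    rw [hTcard] at htb
    have htb' : t * ((A.ncard : ℝ) + 1) ≤ (S.ncard : ℝ) + (B.ncard : ℝ) := by
      exact_mod_cast htb
    have hkey : (0:ℝ) ≤ (t - 11) * n := mul_nonneg (by linarith) (by linarith)
    have hs' : (t + 1) * (S.ncard : ℝ) ≤ (t + 1) * (5 * n / 12 - 2) :=
      mul_le_mul_of_nonneg_left hsle (by linarith)
    have hAeq : (A.ncard : ℝ) = (n : ℝ) - (S.ncard : ℝ) - 2 - (B.ncard : ℝ) := by
      rw [hAcard, hD2card]
    have hcontr : ∀ sa ss sb : ℝ, t * (sa + 1) ≤ ss + sb → sa = (n:ℝ) - ss - 2 - sb →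
        (t + 1) * ss ≤ (t + 1) * (5 * n / 12 - 2) → sb * (t + 1) < 6 * n →
        (0:ℝ) ≤ (t - 11) * n → 11 ≤ t → False := by
      clear * -
      intro sa ss sb h1 h2 h3 h4 h5 h6
      nlinarith [h1, h2, h3, h4, h5, h6]
    exact hcontr _ _ _ htb' hAeq hs' hb6 hkey ht
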